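/- Let p ∈ (1,∞) and δ ≥ 0. There exists a constant c > 0 depending only on p such that for all 3×3 real matrices P, Q and all t ≥ 0 one has both φ'_{|P|}(t) ≤ c·φ'_{|Q|}(t) + φ'_{|P|}(|P−Q|) and φ'_{|P|}(t) ≤ c·( φ'_{|Q|}(t) + φ'_{|Q|}(|P−Q|) ), where |·| denotes the Frobenius norm. -/

import Mathlib

/-- The derivative `φ'(t) = (δ+t)^(p-2)·t` of the N-function `φ = φ_{p,δ}`. -/
noncomputable def phiDeriv (p δ t : ℝ) : ℝ := (δ + t) ^ (p - 2) * t

/-- The shifted derivative `φ'_a(t) = φ'(a+t)·t/(a+t)`. -/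
noncomputable def phiShiftDeriv (p δ a t : ℝ) : ℝ := phiDeriv p δ (a + t) * t / (a + t)

/-- The Frobenius norm of a 3×3 real matrix. -/
noncomputable def frob (P : Matrix (Fin 3) (Fin 3) ℝ) : ℝ :=
  Real.sqrt (∑ i, ∑ j, (P i j) ^ 2)

lemma phiShiftDeriv_eq (p δ a t : ℝ) (ha : 0 ≤ a) (ht : 0 ≤ t) :
    phiShiftDeriv p δ a t = (δ + a + t) ^ (p - 2) * t := by
  unfold phiShiftDeriv phiDeriv
  rcases eq_or_lt_of_le (add_nonneg ha ht) with h | h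
  · have ht0 : t = 0 := by linarith
    simp [ht0]
  · field_simp
    rw [← add_assoc]

lemma frob_nonneg (P : Matrix (Fin 3) (Fin 3) ℝ) : 0 ≤ frob P := Real.sqrt_nonneg _

lemma frob_eq_norm (P : Matrix (Fin 3) (Fin 3) ℝ) :
    frob P = @norm _ (Matrix.frobeniusNormedAddCommGroup (α := ℝ)).toNorm P := by
  rw [Matrix.frobenius_norm_def, frob, Real.sqrt_eq_rpow]
  congr 1
  refine Finset.sum_congr rfl fun i _ => Finset.sum_congr rfl fun j _ => ?_
  rw [Real.norm_eq_abs, show ((2:ℝ)) = ((2:ℕ):ℝ) by norm_num, Real.rpow_natCast, sq_abs]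

lemma frob_tri1 (P Q : Matrix (Fin 3) (Fin 3) ℝ) : frob P ≤ frob Q + frob (P - Q) := by
  letI := Matrix.frobeniusNormedAddCommGroup (m := Fin 3) (n := Fin 3) (α := ℝ)
  rw [frob_eq_norm, frob_eq_norm, frob_eq_norm]
  calc ‖P‖ = ‖Q + (P - Q)‖ := by congr 1; abel
    _ ≤ ‖Q‖ + ‖P - Q‖ := norm_add_le _ _

lemma frob_tri2 (P Q : Matrix (Fin 3) (Fin 3) ℝ) : frob Q ≤ frob P + frob (P - Q) := by
  letI := Matrix.frobeniusNormedAddCommGroup (m := Fin 3) (n := Fin 3) (α := ℝ)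
  rw [frob_eq_norm, frob_eq_norm, frob_eq_norm]
  calc ‖Q‖ = ‖P - (P - Q)‖ := by congr 1; abel
    _ ≤ ‖P‖ + ‖P - Q‖ := norm_sub_le _ _

/-- Monotonicity of `s ↦ (A+s)^q * s` for `q > -1`. -/
lemma mono_aux {A q t e : ℝ} (hA : 0 ≤ A) (hq : -1 < q) (ht : 0 ≤ t) (hte : t ≤ e) :
    (A + t) ^ q * t ≤ (A + e) ^ q * e := by
  rcases eq_or_lt_of_le ht with h0 | h0
  · simp only [← h0, mul_zero]
    exact mul_nonneg (Real.rpow_nonneg (by linarith) q) (by linarith)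
  rcases le_or_gt 0 q with hq0 | hq0
  · exact mul_le_mul (Real.rpow_le_rpow (by linarith) (by linarith) hq0) hte ht
      (Real.rpow_nonneg (by linarith) q)
  · -- q < 0 ; set r = -q ∈ (0,1)
    have hAt : 0 < A + t := by linarith
    have hAe : 0 < A + e := by linarith
    -- key: t * (A+e)^(-q) ≤ e * (A+t)^(-q)
    have hr1 : -q ≤ 1 := by linarith
    have hratio : 1 ≤ (A + e) / (A + t) := (one_le_div hAt).mpr (by linarith)
    have h1 : ((A + e) / (A + t)) ^ (-q) ≤ (A + e) / (A + t) := by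
      calc ((A + e) / (A + t)) ^ (-q) ≤ ((A + e) / (A + t)) ^ (1:ℝ) :=
            Real.rpow_le_rpow_of_exponent_le hratio hr1
        _ = (A + e) / (A + t) := Real.rpow_one _
    have h2 : (A + e) ^ (-q) = ((A + e) / (A + t)) ^ (-q) * (A + t) ^ (-q) := by
      rw [← Real.mul_rpow (by positivity) (by positivity)]
      rw [div_mul_cancel₀ _ (ne_of_gt hAt)]
    have h3 : t * (A + e) ^ (-q) ≤ e * (A + t) ^ (-q) := by
      rw [h2]
      calc t * (((A + e) / (A + t)) ^ (-q) * (A + t) ^ (-q))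
          ≤ t * ((A + e) / (A + t) * (A + t) ^ (-q)) := by
            apply mul_le_mul_of_nonneg_left _ ht
            exact mul_le_mul_of_nonneg_right h1 (Real.rpow_nonneg hAt.le _)
        _ = t * (A + e) / (A + t) * (A + t) ^ (-q) := by ring
        _ ≤ e * (A + t) ^ (-q) := by
            apply mul_le_mul_of_nonneg_right _ (Real.rpow_nonneg hAt.le _)
            rw [div_le_iff₀ hAt]
            nlinarith
    have hAtq : (A + t) ^ q = ((A + t) ^ (-q))⁻¹ := by
      rw [← Real.rpow_neg hAt.le, neg_neg]
    have hAeq : (A + e) ^ q = ((A + e) ^ (-q))⁻¹ := by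
      rw [← Real.rpow_neg hAe.le, neg_neg]
    rw [hAtq, hAeq]
    rw [mul_comm, mul_comm _ e, ← div_eq_mul_inv, ← div_eq_mul_inv]
    rw [div_le_div_iff₀ (by positivity) (by positivity)]
    linarith [h3]

/-- Doubling bound, nonnegative exponent. -/
lemma dbl_pos {q X Y : ℝ} (hq : 0 ≤ q) (hX : 0 ≤ X) (hY : 0 ≤ Y) (h : Y ≤ 2 * X) :
    Y ^ q ≤ 2 ^ q * X ^ q := by
  calc Y ^ q ≤ (2 * X) ^ q := Real.rpow_le_rpow hY h hq
    _ = 2 ^ q * X ^ q := Real.mul_rpow (by norm_num) hX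

/-- Doubling bound, nonpositive exponent. -/
lemma dbl_neg {q X Y : ℝ} (hq : q ≤ 0) (hX : 0 < X) (hY : 0 < Y) (h : Y ≤ 2 * X) :
    X ^ q ≤ 2 ^ (-q) * Y ^ q := by
  have h1 : (2 * X) ^ q ≤ Y ^ q := Real.rpow_le_rpow_of_nonpos hY h hq
  have h2 : (2 * X) ^ q = 2 ^ q * X ^ q := Real.mul_rpow (by norm_num) hX.le
  have h3 : (2:ℝ) ^ (-q) * 2 ^ q = 1 := by
    rw [← Real.rpow_add (by norm_num)]; norm_num
  calc X ^ q = 2 ^ (-q) * (2 ^ q * X ^ q) := by rw [← mul_assoc, h3, one_mul]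
    _ ≤ 2 ^ (-q) * Y ^ q := by
        apply mul_le_mul_of_nonneg_left _ (Real.rpow_nonneg (by norm_num) _)
        rw [← h2]; exact h1

/-- Core real-number inequality. -/
lemma key_ineq (p : ℝ) (hp : 1 < p) (δ a b e t : ℝ) (hδ : 0 ≤ δ) (ha : 0 ≤ a)
    (hb : 0 ≤ b) (he : 0 ≤ e) (ht : 0 ≤ t) (hab : a ≤ b + e) (hba : b ≤ a + e) :
    (δ + a + t) ^ (p-2) * t
        ≤ 2 ^ |p-2| * ((δ + b + t) ^ (p-2) * t) + (δ + a + e) ^ (p-2) * e ∧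
    (δ + a + t) ^ (p-2) * t
        ≤ 2 ^ |p-2| * ((δ + b + t) ^ (p-2) * t + (δ + b + e) ^ (p-2) * e) := by
  set c : ℝ := 2 ^ |p-2| with hc
  have hc0 : 0 < c := Real.rpow_pos_of_pos (by norm_num) _
  have hnn1 : 0 ≤ (δ + b + t) ^ (p-2) * t :=
    mul_nonneg (Real.rpow_nonneg (by linarith) _) ht
  have hnn2 : 0 ≤ (δ + a + e) ^ (p-2) * e :=
    mul_nonneg (Real.rpow_nonneg (by linarith) _) he
  have hnn3 : 0 ≤ (δ + b + e) ^ (p-2) * e :=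
    mul_nonneg (Real.rpow_nonneg (by linarith) _) he
  rcases eq_or_lt_of_le ht with h0 | h0
  · constructor <;> simp [← h0] <;> positivity
  have hq1 : (-1:ℝ) < p - 2 := by linarith
  rcases le_or_gt 2 p with hp2 | hp2
  · -- p ≥ 2, exponent q = p-2 ≥ 0, |p-2| = p-2
    have habs : |p-2| = p-2 := abs_of_nonneg (by linarith)
    have hq0 : (0:ℝ) ≤ p - 2 := by linarith
    rcases le_or_gt e t with het | het
    · -- e ≤ t : bound by the first term in both goals
      have hd : δ + a + t ≤ 2 * (δ + b + t) := by linarith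
      have h1 : (δ + a + t) ^ (p-2) ≤ c * (δ + b + t) ^ (p-2) := by
        rw [hc, habs]; exact dbl_pos hq0 (by linarith) (by linarith) hd
      have h2 : (δ + a + t) ^ (p-2) * t ≤ c * ((δ + b + t) ^ (p-2) * t) := by
        calc (δ + a + t) ^ (p-2) * t ≤ c * (δ + b + t) ^ (p-2) * t :=
              mul_le_mul_of_nonneg_right h1 ht
          _ = c * ((δ + b + t) ^ (p-2) * t) := by ring
      exact ⟨by linarith, by nlinarith⟩
    · -- t < e
      constructor
      · have h1 : (δ + a + t) ^ (p-2) * t ≤ (δ + a + e) ^ (p-2) * e := by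
          have := mono_aux (A := δ + a) (q := p-2) (t := t) (e := e)
            (by linarith) hq1 ht het.le
          linarith [this]
        nlinarith
      · have hd : δ + a + t ≤ 2 * (δ + b + e) := by linarith
        have h1 : (δ + a + t) ^ (p-2) ≤ c * (δ + b + e) ^ (p-2) := by
          rw [hc, habs]; exact dbl_pos hq0 (by linarith) (by linarith) hd
        have h2 : (δ + a + t) ^ (p-2) * t ≤ c * ((δ + b + e) ^ (p-2) * e) := by
          calc (δ + a + t) ^ (p-2) * t ≤ (c * (δ + b + e) ^ (p-2)) * e :=
              mul_le_mul h1 het.le ht (by positivity)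
            _ = c * ((δ + b + e) ^ (p-2) * e) := by ring
        nlinarith
  · -- p < 2, exponent q = p-2 < 0, |p-2| = 2-p
    have habs : |p-2| = -(p-2) := abs_of_neg (by linarith)
    have hq0 : p - 2 ≤ 0 := by linarith
    have hAt : 0 < δ + a + t := by linarith
    have hBt : 0 < δ + b + t := by linarith
    rcases le_or_gt e t with het | het
    · -- e ≤ t : bound by the first term in both goals
      have hd : δ + b + t ≤ 2 * (δ + a + t) := by linarith
      have h1 : (δ + a + t) ^ (p-2) ≤ c * (δ + b + t) ^ (p-2) := by
        rw [hc, habs]; exact dbl_neg hq0 hAt hBt hd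
      have h2 : (δ + a + t) ^ (p-2) * t ≤ c * ((δ + b + t) ^ (p-2) * t) := by
        calc (δ + a + t) ^ (p-2) * t ≤ c * (δ + b + t) ^ (p-2) * t :=
              mul_le_mul_of_nonneg_right h1 ht
          _ = c * ((δ + b + t) ^ (p-2) * t) := by ring
      exact ⟨by linarith, by nlinarith⟩
    · -- t < e
      have hmono : (δ + a + t) ^ (p-2) * t ≤ (δ + a + e) ^ (p-2) * e := by
        have := mono_aux (A := δ + a) (q := p-2) (t := t) (e := e)
          (by linarith) hq1 ht het.le
        linarith [this]
      constructor
      · nlinarith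
      · have hAe : 0 < δ + a + e := by linarith
        have hBe : 0 < δ + b + e := by linarith
        have hd : δ + b + e ≤ 2 * (δ + a + e) := by linarith
        have h1 : (δ + a + e) ^ (p-2) ≤ c * (δ + b + e) ^ (p-2) := by
          rw [hc, habs]; exact dbl_neg hq0 hAe hBe hd
        have h2 : (δ + a + e) ^ (p-2) * e ≤ c * ((δ + b + e) ^ (p-2) * e) := by
          calc (δ + a + e) ^ (p-2) * e ≤ c * (δ + b + e) ^ (p-2) * e :=
              mul_le_mul_of_nonneg_right h1 he
            _ = c * ((δ + b + e) ^ (p-2) * e) := by ring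
        nlinarith

/-- For `p ∈ (1,∞)` there exists `c > 0` depending only on `p` such that for all
`δ ≥ 0`, all 3×3 real matrices `P, Q` and all `t ≥ 0`:
`φ'_{|P|}(t) ≤ c·φ'_{|Q|}(t) + φ'_{|P|}(|P−Q|)` and
`φ'_{|P|}(t) ≤ c·(φ'_{|Q|}(t) + φ'_{|Q|}(|P−Q|))`. -/
theorem shift_change_deriv (p : ℝ) (hp : 1 < p) :
    ∃ c : ℝ, 0 < c ∧
      ∀ δ : ℝ, 0 ≤ δ → ∀ P Q : Matrix (Fin 3) (Fin 3) ℝ, ∀ t : ℝ, 0 ≤ t →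
        phiShiftDeriv p δ (frob P) t
            ≤ c * phiShiftDeriv p δ (frob Q) t
              + phiShiftDeriv p δ (frob P) (frob (P - Q)) ∧
        phiShiftDeriv p δ (frob P) t
            ≤ c * (phiShiftDeriv p δ (frob Q) t
              + phiShiftDeriv p δ (frob Q) (frob (P - Q))) := by
  refine ⟨2 ^ |p-2|, Real.rpow_pos_of_pos (by norm_num) _, fun δ hδ P Q t ht => ?_⟩
  have ha := frob_nonneg P
  have hb := frob_nonneg Q
  have he := frob_nonneg (P - Q)
  rw [phiShiftDeriv_eq p δ _ _ ha ht, phiShiftDeriv_eq p δ _ _ hb ht,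
    phiShiftDeriv_eq p δ _ _ ha he, phiShiftDeriv_eq p δ _ _ hb he]
  exact key_ineq p hp δ (frob P) (frob Q) (frob (P - Q)) t hδ ha hb he ht
    (frob_tri1 P Q) (frob_tri2 P Q)
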